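/- Let γ ≥ 1, μ > 0, v₊ > 2, and for small ε > 0 let v̄_ε be the soft-congestion traveling-wave profile normalized by v̄_ε(0) = 1 + ε^{1/(γ+1)}, and let v̄ be the limit profile with speed s = 1/sqrt(v₊ − 1). Then there exist constants C > 0 and ε₀ > 0 such that for all 0 < ε < ε₀, sup_{x ≥ 0} |v̄_ε(x) − v̄(x)| ≤ C ε^{1/(γ+1)}; i.e. in the free zone the error between the approximate and limit profiles is of order ε^{1/(γ+1)}. -/

import Mathlib

open Set Filter

private lemma aux_mono (f f' : ℝ → ℝ) {x : ℝ} (hx : 0 ≤ x)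
    (hd : ∀ t ∈ Set.Icc 0 x, HasDerivAt f (f' t) t)
    (h0 : ∀ t ∈ Set.Icc 0 x, 0 ≤ f' t) : f 0 ≤ f x := by
  have hmono : MonotoneOn f (Set.Icc 0 x) := by
    apply monotoneOn_of_deriv_nonneg (convex_Icc 0 x)
      (fun t ht => (hd t ht).continuousAt.continuousWithinAt)
    · intro t ht
      rw [interior_Icc] at ht
      exact ((hd t (Set.Ioo_subset_Icc_self ht)).differentiableAt).differentiableWithinAt
    · intro t ht
      rw [interior_Icc] at ht
      rw [(hd t (Set.Ioo_subset_Icc_self ht)).deriv]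
      exact h0 t (Set.Ioo_subset_Icc_self ht)
  exact hmono (Set.left_mem_Icc.2 hx) (Set.right_mem_Icc.2 hx) hx

private lemma aux_exp_diff {a c m x : ℝ} (hm : 0 < m) (hma : m ≤ a) (hmc : m ≤ c)
    (hx : 0 ≤ x) :
    |Real.exp (-(a * x)) - Real.exp (-(c * x))| ≤ |a - c| / m := by
  wlog hac : a ≤ c generalizing a c
  · rw [abs_sub_comm, abs_sub_comm a c]
    exact this hmc hma (le_of_not_ge hac)
  have h1 : Real.exp (-(c * x)) ≤ Real.exp (-(a * x)) := by
    apply Real.exp_le_exp.2; nlinarith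
  have hxe : x * Real.exp (-(m * x)) ≤ 1 / m := by
    have h2 : m * x + 1 ≤ Real.exp (m * x) := Real.add_one_le_exp _
    have h3 : Real.exp (-(m * x)) * Real.exp (m * x) = 1 := by
      rw [← Real.exp_add]; simp
    have h4 : 0 < Real.exp (-(m * x)) := Real.exp_pos _
    rw [le_div_iff₀ hm]
    nlinarith [mul_le_mul_of_nonneg_right (show m * x ≤ Real.exp (m * x) - 1 by linarith) h4.le]
  have hprod : Real.exp (-(a * x)) * Real.exp (-((c - a) * x)) = Real.exp (-(c * x)) := by
    rw [← Real.exp_add]; ring_nf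
  have h6 : 1 - Real.exp (-((c - a) * x)) ≤ (c - a) * x := by
    have := Real.add_one_le_exp (-((c - a) * x)); linarith
  have h7 : Real.exp (-(a * x)) ≤ Real.exp (-(m * x)) := Real.exp_le_exp.2 (by nlinarith)
  have key : Real.exp (-(a * x)) - Real.exp (-(c * x)) ≤ (c - a) / m := by
    calc Real.exp (-(a * x)) - Real.exp (-(c * x))
        = Real.exp (-(a * x)) * (1 - Real.exp (-((c - a) * x))) := by
          rw [mul_sub, mul_one, hprod]
      _ ≤ Real.exp (-(a * x)) * ((c - a) * x) :=
          mul_le_mul_of_nonneg_left h6 (Real.exp_pos _).le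
      _ ≤ Real.exp (-(m * x)) * ((c - a) * x) := by
          apply mul_le_mul_of_nonneg_right h7 (mul_nonneg (by linarith) hx)
      _ = (c - a) * (x * Real.exp (-(m * x))) := by ring
      _ ≤ (c - a) * (1 / m) := mul_le_mul_of_nonneg_left hxe (by linarith)
      _ = (c - a) / m := by ring
  rw [abs_of_nonneg (by linarith), abs_of_nonpos (by linarith : a - c ≤ 0)]
  calc Real.exp (-(a * x)) - Real.exp (-(c * x)) ≤ (c - a) / m := key
    _ = -(a - c) / m := by ring

private lemma aux_frac {c u v : ℝ} (hc : 0 ≤ c) (hu : 0 ≤ u) (hv : 0 ≤ v) :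
    c / (1 + u) - c / (1 + v) ≤ c * |u - v| := by
  have hu1 : (0 : ℝ) < 1 + u := by linarith
  have hv1 : (0 : ℝ) < 1 + v := by linarith
  have h1 : c / (1 + u) - c / (1 + v) = c * (v - u) / ((1 + u) * (1 + v)) := by
    field_simp; ring
  rw [h1, div_le_iff₀ (by positivity)]
  have h2 : v - u ≤ |u - v| := by rw [abs_sub_comm]; exact le_abs_self _
  nlinarith [abs_nonneg (u - v), mul_le_mul_of_nonneg_left h2 hc,
    mul_nonneg (mul_nonneg hc (abs_nonneg (u - v))) (show (0:ℝ) ≤ (1+u)*(1+v) - 1 by nlinarith)]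

private lemma aux_logistic_upper {w d : ℝ → ℝ} {m c x : ℝ} (hm0 : 0 < m) (hx : 0 ≤ x)
    (hd : ∀ t ∈ Set.Icc 0 x, HasDerivAt w (d t) t)
    (hw0 : ∀ t ∈ Set.Icc 0 x, 0 < w t)
    (hwm : ∀ t ∈ Set.Icc 0 x, w t < m)
    (hineq : ∀ t ∈ Set.Icc 0 x, d t ≤ c * (w t * (m - w t))) :
    w x * (1 + (m - w 0) / w 0 * Real.exp (-(c * m * x))) ≤ m := by
  have h0m : (0 : ℝ) ∈ Set.Icc 0 x := Set.left_mem_Icc.2 hx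
  have hxm : x ∈ Set.Icc 0 x := Set.right_mem_Icc.2 hx
  have hder : ∀ t ∈ Set.Icc 0 x, HasDerivAt
      (fun u => c * m * u - (Real.log (w u) - Real.log (m - w u)))
      (c * m - (d t / w t - (0 - d t) / (m - w t))) t := by
    intro t ht
    have hw := hw0 t ht
    have hmw : 0 < m - w t := sub_pos.2 (hwm t ht)
    have h1 : HasDerivAt (fun u => Real.log (w u)) (d t / w t) t :=
      (hd t ht).log (ne_of_gt hw)
    have h2 : HasDerivAt (fun u => Real.log (m - w u)) ((0 - d t) / (m - w t)) t :=
      ((hasDerivAt_const t m).sub (hd t ht)).log (ne_of_gt hmw)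
    have h3 : HasDerivAt (fun u : ℝ => c * m * u) (c * m) t := by
      simpa using (hasDerivAt_id t).const_mul (c * m)
    exact h3.sub (h1.sub h2)
  have hnon : ∀ t ∈ Set.Icc 0 x, 0 ≤ c * m - (d t / w t - (0 - d t) / (m - w t)) := by
    intro t ht
    have hw := hw0 t ht
    have hmw : 0 < m - w t := sub_pos.2 (hwm t ht)
    have hi := hineq t ht
    have h4 : d t / w t - (0 - d t) / (m - w t) ≤ c * m := by
      rw [div_sub_div _ _ (ne_of_gt hw) (ne_of_gt hmw), div_le_iff₀ (by positivity)]
      nlinarith [mul_le_mul_of_nonneg_right hi hm0.le]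
    linarith
  have key : c * m * 0 - (Real.log (w 0) - Real.log (m - w 0))
      ≤ c * m * x - (Real.log (w x) - Real.log (m - w x)) :=
    aux_mono _ _ hx hder hnon
  have hlog : Real.log (w x) - Real.log (m - w x)
      ≤ (Real.log (w 0) - Real.log (m - w 0)) + c * m * x := by linarith
  have hexp := Real.exp_le_exp.2 hlog
  rw [Real.exp_add, Real.exp_sub, Real.exp_sub, Real.exp_log (hw0 x hxm),
    Real.exp_log (sub_pos.2 (hwm x hxm)), Real.exp_log (hw0 0 h0m),
    Real.exp_log (sub_pos.2 (hwm 0 h0m))] at hexp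
  have hmwx : 0 < m - w x := sub_pos.2 (hwm x hxm)
  have hmw0 : 0 < m - w 0 := sub_pos.2 (hwm 0 h0m)
  have hw0' := hw0 0 h0m
  have hE : Real.exp (-(c * m * x)) * Real.exp (c * m * x) = 1 := by
    rw [← Real.exp_add]; simp
  have hcross : w x * (m - w 0) ≤ w 0 * Real.exp (c * m * x) * (m - w x) := by
    have h5 : w 0 / (m - w 0) * Real.exp (c * m * x)
        = w 0 * Real.exp (c * m * x) / (m - w 0) := by ring
    rw [h5, div_le_div_iff₀ hmwx hmw0] at hexp
    exact hexp
  have h8 : w x * (m - w 0) * Real.exp (-(c * m * x)) ≤ w 0 * (m - w x) := by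
    calc w x * (m - w 0) * Real.exp (-(c * m * x))
        ≤ w 0 * Real.exp (c * m * x) * (m - w x) * Real.exp (-(c * m * x)) :=
          mul_le_mul_of_nonneg_right hcross (Real.exp_pos _).le
      _ = w 0 * (m - w x) * (Real.exp (-(c * m * x)) * Real.exp (c * m * x)) := by ring
      _ = w 0 * (m - w x) := by rw [hE, mul_one]
  rw [← mul_le_mul_iff_of_pos_right hw0']
  have hexpand : w x * (1 + (m - w 0) / w 0 * Real.exp (-(c * m * x))) * w 0
      = w x * w 0 + w x * (m - w 0) * Real.exp (-(c * m * x)) := by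
    field_simp
  rw [hexpand]
  nlinarith [h8]

private lemma aux_logistic_lower {w d : ℝ → ℝ} {m c x : ℝ} (hm0 : 0 < m) (hx : 0 ≤ x)
    (hd : ∀ t ∈ Set.Icc 0 x, HasDerivAt w (d t) t)
    (hw0 : ∀ t ∈ Set.Icc 0 x, 0 < w t)
    (hwm : ∀ t ∈ Set.Icc 0 x, w t < m)
    (hineq : ∀ t ∈ Set.Icc 0 x, c * (w t * (m - w t)) ≤ d t) :
    m ≤ w x * (1 + (m - w 0) / w 0 * Real.exp (-(c * m * x))) := by
  have h0m : (0 : ℝ) ∈ Set.Icc 0 x := Set.left_mem_Icc.2 hx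
  have hxm : x ∈ Set.Icc 0 x := Set.right_mem_Icc.2 hx
  have hder : ∀ t ∈ Set.Icc 0 x, HasDerivAt
      (fun u => (Real.log (w u) - Real.log (m - w u)) - c * m * u)
      ((d t / w t - (0 - d t) / (m - w t)) - c * m) t := by
    intro t ht
    have hw := hw0 t ht
    have hmw : 0 < m - w t := sub_pos.2 (hwm t ht)
    have h1 : HasDerivAt (fun u => Real.log (w u)) (d t / w t) t :=
      (hd t ht).log (ne_of_gt hw)
    have h2 : HasDerivAt (fun u => Real.log (m - w u)) ((0 - d t) / (m - w t)) t :=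
      ((hasDerivAt_const t m).sub (hd t ht)).log (ne_of_gt hmw)
    have h3 : HasDerivAt (fun u : ℝ => c * m * u) (c * m) t := by
      simpa using (hasDerivAt_id t).const_mul (c * m)
    exact (h1.sub h2).sub h3
  have hnon : ∀ t ∈ Set.Icc 0 x, 0 ≤ (d t / w t - (0 - d t) / (m - w t)) - c * m := by
    intro t ht
    have hw := hw0 t ht
    have hmw : 0 < m - w t := sub_pos.2 (hwm t ht)
    have hi := hineq t ht
    have h4 : c * m ≤ d t / w t - (0 - d t) / (m - w t) := by
      rw [div_sub_div _ _ (ne_of_gt hw) (ne_of_gt hmw), le_div_iff₀ (by positivity)]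
      nlinarith [mul_le_mul_of_nonneg_right hi hm0.le]
    linarith
  have key : (Real.log (w 0) - Real.log (m - w 0)) - c * m * 0
      ≤ (Real.log (w x) - Real.log (m - w x)) - c * m * x :=
    aux_mono _ _ hx hder hnon
  have hlog : (Real.log (w 0) - Real.log (m - w 0)) + c * m * x
      ≤ Real.log (w x) - Real.log (m - w x) := by linarith
  have hexp := Real.exp_le_exp.2 hlog
  rw [Real.exp_add, Real.exp_sub, Real.exp_sub, Real.exp_log (hw0 x hxm),
    Real.exp_log (sub_pos.2 (hwm x hxm)), Real.exp_log (hw0 0 h0m),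
    Real.exp_log (sub_pos.2 (hwm 0 h0m))] at hexp
  have hmwx : 0 < m - w x := sub_pos.2 (hwm x hxm)
  have hmw0 : 0 < m - w 0 := sub_pos.2 (hwm 0 h0m)
  have hw0' := hw0 0 h0m
  have hE : Real.exp (-(c * m * x)) * Real.exp (c * m * x) = 1 := by
    rw [← Real.exp_add]; simp
  have hcross : w 0 * Real.exp (c * m * x) * (m - w x) ≤ w x * (m - w 0) := by
    have h5 : w 0 / (m - w 0) * Real.exp (c * m * x)
        = w 0 * Real.exp (c * m * x) / (m - w 0) := by ring
    rw [h5, div_le_div_iff₀ hmw0 hmwx] at hexp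
    linarith [hexp]
  have h8 : w 0 * (m - w x) ≤ w x * (m - w 0) * Real.exp (-(c * m * x)) := by
    calc w 0 * (m - w x) = w 0 * Real.exp (c * m * x) * (m - w x) * Real.exp (-(c * m * x)) := by
          rw [show w 0 * Real.exp (c * m * x) * (m - w x) * Real.exp (-(c * m * x))
            = w 0 * (m - w x) * (Real.exp (-(c * m * x)) * Real.exp (c * m * x)) by ring, hE,
            mul_one]
      _ ≤ w x * (m - w 0) * Real.exp (-(c * m * x)) :=
          mul_le_mul_of_nonneg_right hcross (Real.exp_pos _).le
  rw [← mul_le_mul_iff_of_pos_right hw0']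
  have hexpand : w x * (1 + (m - w 0) / w 0 * Real.exp (-(c * m * x))) * w 0
      = w x * w 0 + w x * (m - w 0) * Real.exp (-(c * m * x)) := by
    field_simp
  rw [hexpand]
  nlinarith [h8]

set_option maxHeartbeats 2000000 in
/-- In the free zone `x ≥ 0`, the error between the normalized soft-congestion profile
`v̄_ε` and the limit profile `v̄` is of order `ε^{1/(γ+1)}`, uniformly in `x ≥ 0`. -/
theorem stmt11 (γ μ vp : ℝ) (hγ : 1 ≤ γ) (hμ : 0 < μ) (hvp : 2 < vp)
    (pe : ℝ → ℝ → ℝ) (hpe : ∀ ε v : ℝ, pe ε v = ε * (v - 1) ^ (-γ))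
    (vm : ℝ → ℝ) (hvm : ∀ ε : ℝ, vm ε = 1 + ε ^ (1 / γ))
    (se : ℝ → ℝ) (hse : ∀ ε : ℝ, se ε = Real.sqrt ((pe ε (vm ε) - pe ε vp) / (vp - vm ε)))
    (Φ : ℝ → ℝ → ℝ) (hΦ : ∀ ε v : ℝ, Φ ε v = (se ε) ^ 2 * (vp - v) + pe ε vp - pe ε v)
    (ε₀ : ℝ) (hε₀ : 0 < ε₀)
    (vb : ℝ → ℝ → ℝ)
    (hrange : ∀ ε ∈ Ioo (0 : ℝ) ε₀, ∀ x : ℝ, vb ε x ∈ Ioo (vm ε) vp)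
    (hode : ∀ ε ∈ Ioo (0 : ℝ) ε₀, ∀ x : ℝ,
      HasDerivAt (vb ε) (vb ε x / (μ * se ε) * Φ ε (vb ε x)) x)
    (hmono : ∀ ε ∈ Ioo (0 : ℝ) ε₀, StrictMono (vb ε))
    (hlim_bot : ∀ ε ∈ Ioo (0 : ℝ) ε₀, Tendsto (vb ε) atBot (nhds (vm ε)))
    (hlim_top : ∀ ε ∈ Ioo (0 : ℝ) ε₀, Tendsto (vb ε) atTop (nhds vp))
    (hnorm : ∀ ε ∈ Ioo (0 : ℝ) ε₀, vb ε 0 = 1 + ε ^ (1 / (γ + 1)))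
    (s : ℝ) (hs : s = 1 / Real.sqrt (vp - 1))
    (vlim : ℝ → ℝ)
    (hvlim : ∀ x : ℝ,
      vlim x = if x ≤ 0 then 1 else vp / (1 + (vp - 1) * Real.exp (-s * vp * x / μ))) :
    ∃ C > (0 : ℝ), ∃ ε₁ > (0 : ℝ), ε₁ ≤ ε₀ ∧
      ∀ ε ∈ Ioo (0 : ℝ) ε₁, ∀ x ≥ (0 : ℝ),
        |vb ε x - vlim x| ≤ C * ε ^ (1 / (γ + 1)) := by
  have hvp0 : (0 : ℝ) < vp := by linarith
  have hγ0 : (0 : ℝ) < γ := by linarith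
  have hγ1 : (0 : ℝ) < γ + 1 := by linarith
  have hb0 : (0 : ℝ) < vp - 1 := by linarith
  have hb1 : (1 : ℝ) < vp - 1 := by linarith
  set b : ℝ := vp - 1 with hbdef
  clear_value b
  have hsb : 0 < Real.sqrt b := Real.sqrt_pos.2 hb0
  have hs0 : 0 < s := by rw [hs]; exact div_pos one_pos hsb
  have hs2 : s ^ 2 = 1 / b := by rw [hs, div_pow, one_pow, Real.sq_sqrt hb0.le]
  set k : ℝ := s / μ * vp with hkdef
  clear_value k
  have hk0 : 0 < k := by rw [hkdef]; exact mul_pos (div_pos hs0 hμ) hvp0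
  set C₂ : ℝ := 2 * (1 + b) / b ^ 2 with hC2def
  clear_value C₂
  have hC20 : 0 < C₂ := by
    rw [hC2def]; exact div_pos (by linarith) (pow_pos hb0 2)
  set δ : ℝ := min (min (1 / 2) (s ^ 2 / (2 * C₂))) (b / (2 * (1 + 2 * b))) with hδdef
  clear_value δ
  have hδ0 : 0 < δ := by
    rw [hδdef]
    exact lt_min (lt_min (by norm_num) (div_pos (pow_pos hs0 2) (by linarith)))
      (div_pos hb0 (by linarith))
  have hδ12 : δ ≤ 1 / 2 := by
    rw [hδdef]; exact le_trans (min_le_left _ _) (min_le_left _ _)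
  have hδs : δ ≤ s ^ 2 / (2 * C₂) := by
    rw [hδdef]; exact le_trans (min_le_left _ _) (min_le_right _ _)
  have hδb : δ ≤ b / (2 * (1 + 2 * b)) := by
    rw [hδdef]; exact min_le_right _ _
  set U1 : ℝ := vp * ((b + 1) + 2 * b * vp * C₂ / (μ * s * k)) with hU1def
  clear_value U1
  set U2 : ℝ := 2 * b + vp * ((b + 1) + 2 * b
      + (4 * b / k) * (4 * s * b / μ + vp * C₂ / (μ * s))) with hU2def
  clear_value U2
  have hμsk : 0 < μ * s * k := mul_pos (mul_pos hμ hs0) hk0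
  have hμs : 0 < μ * s := mul_pos hμ hs0
  have hU10 : 0 < U1 := by
    rw [hU1def]
    apply mul_pos hvp0
    have h1 : 0 < 2 * b * vp * C₂ / (μ * s * k) :=
      div_pos (mul_pos (mul_pos (mul_pos two_pos hb0) hvp0) hC20) hμsk
    linarith
  have hU2inner : 0 < (b + 1) + 2 * b + (4 * b / k) * (4 * s * b / μ + vp * C₂ / (μ * s)) := by
    have h1 : 0 < (4 * b / k) * (4 * s * b / μ + vp * C₂ / (μ * s)) := by
      apply mul_pos (div_pos (by linarith) hk0)
      have h2 : 0 < 4 * s * b / μ := div_pos (by nlinarith) hμ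
      have h3 : 0 < vp * C₂ / (μ * s) := div_pos (mul_pos hvp0 hC20) hμs
      linarith
    linarith
  have hU20 : 0 < U2 := by
    rw [hU2def]; linarith [mul_pos hvp0 hU2inner]
  have hU2ge : 2 * b ≤ U2 := by
    rw [hU2def]; linarith [mul_pos hvp0 hU2inner]
  refine ⟨U1 + U2, by linarith, min ε₀ (δ ^ (γ + 1)),
    lt_min hε₀ (Real.rpow_pos_of_pos hδ0 _), min_le_left _ _, ?_⟩
  rintro ε ⟨hε0', hε1'⟩ x hx
  have hεε₀ : ε ∈ Ioo (0 : ℝ) ε₀ := ⟨hε0', lt_of_lt_of_le hε1' (min_le_left _ _)⟩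
  set η : ℝ := ε ^ (1 / (γ + 1)) with hηdef
  clear_value η
  have hη0 : 0 < η := by rw [hηdef]; exact Real.rpow_pos_of_pos hε0' _
  have hηδ : η < δ := by
    have h1 : ε < δ ^ (γ + 1) := lt_of_lt_of_le hε1' (min_le_right _ _)
    have h2 := Real.rpow_lt_rpow hε0'.le h1 (div_pos one_pos hγ1)
    rw [← Real.rpow_mul hδ0.le, mul_one_div, div_self hγ1.ne', Real.rpow_one] at h2
    rw [hηdef]
    exact h2
  have hηhalf : η < 1 / 2 := lt_of_lt_of_le hηδ hδ12
  have hε1 : ε < 1 := by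
    by_contra hcon
    push_neg at hcon
    have h1 : (1 : ℝ) ≤ ε ^ (1 / (γ + 1)) := by
      calc (1 : ℝ) = 1 ^ (1 / (γ + 1)) := (Real.one_rpow _).symm
        _ ≤ ε ^ (1 / (γ + 1)) :=
          Real.rpow_le_rpow zero_le_one hcon (div_pos one_pos hγ1).le
    rw [← hηdef] at h1
    linarith
  have hεη : ε ≤ η := by
    rw [hηdef]
    nth_rewrite 1 [← Real.rpow_one ε]
    exact Real.rpow_le_rpow_of_exponent_ge hε0' hε1.le (by rw [div_le_one hγ1]; linarith)
  have he1η : ε ^ (1 / γ) ≤ η := by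
    rw [hηdef]
    exact Real.rpow_le_rpow_of_exponent_ge hε0' hε1.le
      (by rw [div_le_div_iff₀ hγ1 hγ0]; linarith)
  have he10 : 0 < ε ^ (1 / γ) := Real.rpow_pos_of_pos hε0' _
  -- basic pressure computations
  have hvmε : vm ε = 1 + ε ^ (1 / γ) := hvm ε
  have hpevm : pe ε (vm ε) = 1 := by
    rw [hpe, hvmε, add_sub_cancel_left,
      ← Real.rpow_mul hε0'.le, show 1 / γ * (-γ) = (-1 : ℝ) by field_simp,
      Real.rpow_neg_one]
    exact mul_inv_cancel₀ hε0'.ne'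
  have hpevp : pe ε vp = ε * b ^ (-γ) := by rw [hpe, ← hbdef]
  have hcp1 : b ^ (-γ) ≤ 1 := Real.rpow_le_one_of_one_le_of_nonpos hb1.le (by linarith)
  have hcp0 : 0 < b ^ (-γ) := Real.rpow_pos_of_pos hb0 _
  have hPle : ε * b ^ (-γ) ≤ η := by
    calc ε * b ^ (-γ) ≤ ε * 1 := mul_le_mul_of_nonneg_left hcp1 hε0'.le
      _ = ε := mul_one _
      _ ≤ η := hεη
  have hP0 : 0 < ε * b ^ (-γ) := mul_pos hε0' hcp0
  have hN0 : 0 < 1 - ε * b ^ (-γ) := by linarith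
  have hDge : b / 2 ≤ vp - vm ε := by rw [hvmε]; linarith [he1η, hηhalf]
  have hD0 : 0 < vp - vm ε := by linarith [hb1]
  have hsq : (se ε) ^ 2 = (1 - ε * b ^ (-γ)) / (vp - vm ε) := by
    rw [hse, hpevm, hpevp]
    exact Real.sq_sqrt (div_pos hN0 hD0).le
  have hse0 : 0 < se ε := by
    rw [hse, hpevm, hpevp]
    exact Real.sqrt_pos.2 (div_pos hN0 hD0)
  have hse2pos : 0 < (se ε) ^ 2 := pow_pos hse0 2
  -- |se² - s²| ≤ C₂ η
  have hident : (se ε) ^ 2 - s ^ 2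
      = (ε ^ (1 / γ) - b * (ε * b ^ (-γ))) / ((vp - vm ε) * b) := by
    rw [hsq, hs2, hvmε]
    rw [hvmε] at hD0
    field_simp
    linear_combination hbdef
  have hnum : |ε ^ (1 / γ) - b * (ε * b ^ (-γ))| ≤ (1 + b) * η := by
    have h1 : b * (ε * b ^ (-γ)) ≤ b * η := mul_le_mul_of_nonneg_left hPle hb0.le
    have h2 : 0 ≤ b * (ε * b ^ (-γ)) := (mul_pos hb0 hP0).le
    have h3 : 0 ≤ b * η := le_trans h2 h1
    rw [abs_le]
    constructor
    · linarith only [he1η, he10, h1, h2, h3, hη0, hb0]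
    · linarith only [he1η, he10, h1, h2, h3, hη0, hb0]
  have hsqdiff : |(se ε) ^ 2 - s ^ 2| ≤ C₂ * η := by
    rw [hident, abs_div, abs_of_pos (mul_pos hD0 hb0), div_le_iff₀ (mul_pos hD0 hb0)]
    have hC2b : C₂ * b ^ 2 = 2 * (1 + b) := by
      rw [hC2def]; field_simp
    have h3 : C₂ * η * (b ^ 2 / 2) ≤ C₂ * η * ((vp - vm ε) * b) := by
      apply mul_le_mul_of_nonneg_left _ (mul_nonneg hC20.le hη0.le)
      have h5 := mul_le_mul_of_nonneg_right hDge hb0.le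
      linarith only [h5]
    have h4 : C₂ * η * (b ^ 2 / 2) = (1 + b) * η := by
      linear_combination (η / 2) * hC2b
    linarith only [hnum, h3, h4]
  have hC2ηs : C₂ * η ≤ s ^ 2 / 2 := by
    have h1 : C₂ * η ≤ C₂ * δ := mul_le_mul_of_nonneg_left hηδ.le hC20.le
    rw [le_div_iff₀ (by linarith only [hC20] : (0:ℝ) < 2 * C₂)] at hδs
    linarith only [h1, hδs]
  have hsql : s ^ 2 / 2 ≤ (se ε) ^ 2 := by
    have h := abs_le.1 hsqdiff
    linarith only [h.1, hC2ηs]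
  have hsqu : (se ε) ^ 2 ≤ 2 * s ^ 2 := by
    have h := abs_le.1 hsqdiff
    linarith only [h.2, hC2ηs, sq_nonneg s]
  have hsel : s / 2 ≤ se ε := by
    nlinarith only [hse0, hs0, hsql, sq_nonneg (se ε - s / 2), sq_nonneg (se ε + s / 2)]
  have hseu : se ε ≤ 2 * s := by
    nlinarith only [hse0, hs0, hsqu, sq_nonneg (se ε - 2 * s), sq_nonneg (se ε + 2 * s)]
  -- rates
  set kε : ℝ := se ε / μ * vp with hkε
  clear_value kε
  have hkεl : k / 2 ≤ kε := by
    have h1 : s / 2 * (vp / μ) ≤ se ε * (vp / μ) :=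
      mul_le_mul_of_nonneg_right hsel (div_pos hvp0 hμ).le
    calc k / 2 = s / 2 * (vp / μ) := by rw [hkdef]; ring
      _ ≤ se ε * (vp / μ) := h1
      _ = kε := by rw [hkε]; ring
  have hkεk : |kε - k| ≤ vp * C₂ / (μ * s) * η := by
    have h2 : |se ε - s| * (se ε + s) = |(se ε) ^ 2 - s ^ 2| := by
      rw [← abs_of_pos (show 0 < se ε + s by linarith only [hse0, hs0]), ← abs_mul]
      congr 1; ring
    have h3 : |se ε - s| * s ≤ |se ε - s| * (se ε + s) :=
      mul_le_mul_of_nonneg_left (by linarith only [hse0]) (abs_nonneg _)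
    have h1 : |se ε - s| * s ≤ C₂ * η := by
      rw [h2] at h3; linarith only [h3, hsqdiff]
    have h4 : |se ε - s| ≤ C₂ * η / s := by rw [le_div_iff₀ hs0]; exact h1
    have h5 : kε - k = vp / μ * (se ε - s) := by rw [hkε, hkdef]; ring
    rw [h5, abs_mul, abs_of_pos (div_pos hvp0 hμ)]
    calc vp / μ * |se ε - s| ≤ vp / μ * (C₂ * η / s) :=
        mul_le_mul_of_nonneg_left h4 (div_pos hvp0 hμ).le
      _ = vp * C₂ / (μ * s) * η := by field_simp
  -- profile facts
  have hwη : vb ε 0 = 1 + η := by rw [hnorm ε hεε₀, hηdef]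
  have hwgt1 : ∀ t : ℝ, 1 < vb ε t := by
    intro t
    have h := (hrange ε hεε₀ t).1
    rw [hvmε] at h
    linarith only [h, he10]
  have hwltvp : ∀ t : ℝ, vb ε t < vp := fun t => (hrange ε hεε₀ t).2
  have hwmono : ∀ t ∈ Set.Icc 0 x, 1 + η ≤ vb ε t := by
    intro t ht
    rw [← hwη]
    exact (hmono ε hεε₀).monotone ht.1
  have hη_exp : ε * η ^ (-γ) = η := by
    rw [hηdef, ← Real.rpow_mul hε0'.le]
    nth_rewrite 1 [← Real.rpow_one ε]
    rw [← Real.rpow_add hε0']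
    congr 1
    field_simp; ring
  have hpe_le : ∀ t ∈ Set.Icc 0 x, pe ε (vb ε t) ≤ η := by
    intro t ht
    rw [hpe]
    have h1 : η ≤ vb ε t - 1 := by linarith only [hwmono t ht]
    have h2 : (vb ε t - 1) ^ (-γ) ≤ η ^ (-γ) :=
      Real.rpow_le_rpow_of_nonpos hη0 h1 (by linarith only [hγ0])
    calc ε * (vb ε t - 1) ^ (-γ) ≤ ε * η ^ (-γ) := mul_le_mul_of_nonneg_left h2 hε0'.le
      _ = η := hη_exp
  have hpe_vp_le : ∀ t : ℝ, pe ε vp ≤ pe ε (vb ε t) := by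
    intro t
    rw [hpe, hpe]
    apply mul_le_mul_of_nonneg_left _ hε0'.le
    exact Real.rpow_le_rpow_of_nonpos (by linarith only [hwgt1 t])
      (by linarith only [hwltvp t]) (by linarith only [hγ0])
  have hpe_vp_pos : 0 < pe ε vp := by
    rw [hpe]
    exact mul_pos hε0' (Real.rpow_pos_of_pos (by linarith only [hb0, hbdef]) _)
  -- reduced capacity
  set vpm : ℝ := vp - η / (se ε) ^ 2 with hvpmdef
  clear_value vpm
  have hvpm1 : vp - vpm = η / (se ε) ^ 2 := by rw [hvpmdef]; ring
  have hvpm2 : η / (se ε) ^ 2 ≤ 2 * b * η := by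
    have hs2b : s ^ 2 * b = 1 := by rw [hs2]; field_simp
    have h1 : s ^ 2 / 2 * b ≤ (se ε) ^ 2 * b := mul_le_mul_of_nonneg_right hsql hb0.le
    have h2 : (1 : ℝ) / 2 ≤ (se ε) ^ 2 * b := by linarith only [h1, hs2b]
    rw [div_le_iff₀ hse2pos]
    have h3 := mul_le_mul_of_nonneg_left h2 (by linarith only [hη0] : (0:ℝ) ≤ 2 * η)
    linarith only [h3]
  have hvpm3 : η / (se ε) ^ 2 ≤ b / 2 := by
    rw [le_div_iff₀ (show (0:ℝ) < 2 * (1 + 2 * b) by linarith only [hb0])] at hδb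
    have h1 := mul_le_mul_of_nonneg_left hηδ.le (show (0:ℝ) ≤ 2 * b by linarith only [hb0])
    linarith only [hvpm2, h1, hδb, hδ0]
  have hvpmpos0 : 0 < η / (se ε) ^ 2 := div_pos hη0 hse2pos
  have hw0vpm : 1 + η < vpm := by
    rw [hvpmdef]; linarith only [hvpm3, hηhalf, hb1, hbdef]
  have hvpm_half : vp / 2 ≤ vpm := by
    rw [hvpmdef]; linarith only [hvpm3, hb1, hbdef]
  have hvpm0 : 0 < vpm := by linarith only [hvpm_half, hvp0]
  have hvpmlevp : vpm ≤ vp := by linarith only [hvpmpos0, hvpm1]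
  set κε : ℝ := se ε / μ * vpm with hκε
  clear_value κε
  have hκεl : k / 4 ≤ κε := by
    have h2 : s / 2 * (vp / 2 / μ) ≤ se ε * (vpm / μ) := by
      apply mul_le_mul hsel _ (div_nonneg (by linarith only [hvp0]) hμ.le) hse0.le
      exact (div_le_div_iff_of_pos_right hμ).2 hvpm_half
    calc k / 4 = s / 2 * (vp / 2 / μ) := by rw [hkdef]; ring
      _ ≤ se ε * (vpm / μ) := h2
      _ = κε := by rw [hκε]; ring
  have hκεk : |κε - k| ≤ vp * C₂ / (μ * s) * η + 4 * s * b / μ * η := by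
    have h2 : κε - kε = se ε / μ * (vpm - vp) := by rw [hκε, hkε]; ring
    have h3 : |vpm - vp| = η / (se ε) ^ 2 := by
      rw [abs_sub_comm, abs_of_pos (by linarith only [hvpmpos0, hvpm1] : 0 < vp - vpm), hvpm1]
    have h1 : |κε - kε| ≤ 4 * s * b / μ * η := by
      rw [h2, abs_mul, abs_of_pos (div_pos hse0 hμ), h3]
      calc se ε / μ * (η / (se ε) ^ 2) ≤ 2 * s / μ * (2 * b * η) := by
            apply mul_le_mul _ hvpm2 (div_pos hη0 hse2pos).le
              (div_nonneg (by linarith only [hs0]) hμ.le)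
            exact (div_le_div_iff_of_pos_right hμ).2 hseu
        _ = 4 * s * b / μ * η := by ring
    have h4 := abs_sub_le κε kε k
    linarith only [hkεk, h1, h4]
  -- the limit profile at x
  set Q : ℝ := b * Real.exp (-(k * x)) with hQdef
  clear_value Q
  have hQ0 : 0 ≤ Q := by rw [hQdef]; exact mul_nonneg hb0.le (Real.exp_pos _).le
  have hℓ : vlim x = vp / (1 + Q) := by
    rw [hvlim x]
    rcases eq_or_lt_of_le hx with h | h
    · rw [if_pos h.symm.le, hQdef, ← h]
      norm_num
      rw [hbdef, show (1:ℝ) + (vp - 1) = vp by ring, div_self hvp0.ne']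
    · rw [if_neg (not_le.2 h), hQdef, show -s * vp * x / μ = -(k * x) by rw [hkdef]; ring]
  -- upper comparison
  have hub : vb ε x * (1 + (vp - vb ε 0) / vb ε 0
      * Real.exp (-(se ε / μ * vp * x))) ≤ vp := by
    apply aux_logistic_upper (d := fun t => vb ε t / (μ * se ε) * Φ ε (vb ε t)) hvp0 hx
    · exact fun t _ => hode ε hεε₀ t
    · exact fun t _ => lt_trans one_pos (hwgt1 t)
    · exact fun t _ => hwltvp t
    · intro t ht
      have hΦle : Φ ε (vb ε t) ≤ (se ε) ^ 2 * (vp - vb ε t) := by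
        rw [hΦ]; linarith only [hpe_vp_le t]
      have h1 : (0:ℝ) ≤ vb ε t / (μ * se ε) :=
        div_nonneg (by linarith only [hwgt1 t]) (mul_pos hμ hse0).le
      calc vb ε t / (μ * se ε) * Φ ε (vb ε t)
          ≤ vb ε t / (μ * se ε) * ((se ε) ^ 2 * (vp - vb ε t)) :=
            mul_le_mul_of_nonneg_left hΦle h1
        _ = se ε / μ * (vb ε t * (vp - vb ε t)) := by
            field_simp
  rw [← hkε] at hub
  rw [hwη] at hub
  have h1η : (0:ℝ) < 1 + η := by linarith
  set a1 : ℝ := (vp - (1 + η)) / (1 + η) with ha1def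
  clear_value a1
  have ha1nonneg : 0 ≤ a1 := by
    rw [ha1def]; apply div_nonneg _ h1η.le; linarith only [hηhalf, hvp]
  set q1 : ℝ := a1 * Real.exp (-(kε * x)) with hq1def
  clear_value q1
  have hq1nonneg : 0 ≤ q1 := by
    rw [hq1def]; exact mul_nonneg ha1nonneg (Real.exp_pos _).le
  have hub2 : vb ε x ≤ vp / (1 + q1) := by
    rw [le_div_iff₀ (by linarith only [hq1nonneg])]
    exact hub
  have hkεx0 : 0 ≤ kε * x := mul_nonneg (by linarith only [hkεl, hk0]) hx
  have hEε1 : Real.exp (-(kε * x)) ≤ 1 := Real.exp_le_one_iff.2 (by linarith only [hkεx0])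
  have hba1 : b - a1 = (b + 1) * η / (1 + η) := by
    rw [ha1def, hbdef]; field_simp; ring
  have hba1le : b - a1 ≤ (b + 1) * η := by
    rw [hba1]
    apply div_le_self (mul_nonneg (by linarith only [hb0]) hη0.le) (by linarith only [hη0])
  have hba1nonneg : 0 ≤ b - a1 := by
    rw [hba1]
    exact div_nonneg (mul_nonneg (by linarith only [hb0]) hη0.le) h1η.le
  have hEEε : |Real.exp (-(kε * x)) - Real.exp (-(k * x))| ≤ |kε - k| / (k / 2) :=
    aux_exp_diff (by linarith only [hk0]) hkεl (by linarith only [hk0]) hx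
  have hq1Q : |q1 - Q| ≤ (b - a1) + b * (|kε - k| / (k / 2)) := by
    have hid : q1 - Q = (a1 - b) * Real.exp (-(kε * x))
        + b * (Real.exp (-(kε * x)) - Real.exp (-(k * x))) := by
      rw [hq1def, hQdef]; ring
    rw [hid]
    calc |(a1 - b) * Real.exp (-(kε * x))
          + b * (Real.exp (-(kε * x)) - Real.exp (-(k * x)))|
        ≤ |(a1 - b) * Real.exp (-(kε * x))|
          + |b * (Real.exp (-(kε * x)) - Real.exp (-(k * x)))| := abs_add_le _ _
      _ = (b - a1) * Real.exp (-(kε * x))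
          + b * |Real.exp (-(kε * x)) - Real.exp (-(k * x))| := by
          rw [abs_mul, abs_mul, abs_of_pos hb0, abs_of_nonneg (Real.exp_pos _).le,
            abs_sub_comm a1 b, abs_of_nonneg hba1nonneg]
      _ ≤ (b - a1) * 1 + b * (|kε - k| / (k / 2)) := by
          apply add_le_add
          · exact mul_le_mul_of_nonneg_left hEε1 hba1nonneg
          · exact mul_le_mul_of_nonneg_left hEEε hb0.le
      _ = (b - a1) + b * (|kε - k| / (k / 2)) := by ring
  have hupperF : vb ε x - vlim x ≤ U1 * η := by
    have h1 : vb ε x - vlim x ≤ vp / (1 + q1) - vp / (1 + Q) := by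
      rw [hℓ]; linarith only [hub2]
    have h2 : vp / (1 + q1) - vp / (1 + Q) ≤ vp * |q1 - Q| := aux_frac hvp0.le hq1nonneg hQ0
    have h3 : |q1 - Q| ≤ (b + 1) * η + b * ((vp * C₂ / (μ * s) * η) / (k / 2)) := by
      have h4 : b * (|kε - k| / (k / 2)) ≤ b * ((vp * C₂ / (μ * s) * η) / (k / 2)) := by
        apply mul_le_mul_of_nonneg_left _ hb0.le
        exact (div_le_div_iff_of_pos_right (by linarith only [hk0])).2 hkεk
      linarith only [hq1Q, hba1le, h4]
    have h5 : vp * |q1 - Q| ≤ vp * ((b + 1) * η + b * ((vp * C₂ / (μ * s) * η) / (k / 2))) :=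
      mul_le_mul_of_nonneg_left h3 hvp0.le
    have h6 : vp * ((b + 1) * η + b * ((vp * C₂ / (μ * s) * η) / (k / 2))) = U1 * η := by
      rw [hU1def]; field_simp
    linarith only [h1, h2, h5, h6]
  -- lower comparison
  have hlowerF : vlim x - vb ε x ≤ U2 * η := by
    have hvpvpm : vp - vpm ≤ 2 * b * η := by rw [hvpm1]; exact hvpm2
    by_cases hcase : ∀ t ∈ Set.Icc 0 x, vb ε t < vpm
    · have hlb : vpm ≤ vb ε x * (1 + (vpm - vb ε 0) / vb ε 0
          * Real.exp (-(se ε / μ * vpm * x))) := by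
        apply aux_logistic_lower (d := fun t => vb ε t / (μ * se ε) * Φ ε (vb ε t)) hvpm0 hx
        · exact fun t _ => hode ε hεε₀ t
        · exact fun t _ => lt_trans one_pos (hwgt1 t)
        · exact hcase
        · intro t ht
          have hΦge : (se ε) ^ 2 * (vpm - vb ε t) ≤ Φ ε (vb ε t) := by
            rw [hΦ]
            have h1 : pe ε (vb ε t) ≤ η := hpe_le t ht
            have h3 : (se ε) ^ 2 * (vp - vb ε t)
                = (se ε) ^ 2 * (vpm - vb ε t) + η := by
              rw [hvpmdef]
              field_simp
              ring
            linarith only [h1, h3, hpe_vp_pos]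
          have h1 : (0:ℝ) ≤ vb ε t / (μ * se ε) :=
            div_nonneg (by linarith only [hwgt1 t]) (mul_pos hμ hse0).le
          calc se ε / μ * (vb ε t * (vpm - vb ε t))
              = vb ε t / (μ * se ε) * ((se ε) ^ 2 * (vpm - vb ε t)) := by
                field_simp
            _ ≤ vb ε t / (μ * se ε) * Φ ε (vb ε t) :=
                mul_le_mul_of_nonneg_left hΦge h1
      rw [← hκε, hwη] at hlb
      set a2 : ℝ := (vpm - (1 + η)) / (1 + η) with ha2def
      clear_value a2
      set q2 : ℝ := a2 * Real.exp (-(κε * x)) with hq2def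
      clear_value q2
      have ha2nonneg : 0 ≤ a2 := by
        rw [ha2def]; apply div_nonneg _ h1η.le; linarith only [hw0vpm]
      have hq2nonneg : 0 ≤ q2 := by
        rw [hq2def]; exact mul_nonneg ha2nonneg (Real.exp_pos _).le
      have hlb2 : vpm / (1 + q2) ≤ vb ε x := by
        rw [div_le_iff₀ (by linarith only [hq2nonneg])]
        exact hlb
      have ha2leb : a2 ≤ b := by
        have h1 : a2 ≤ vpm - (1 + η) := by
          rw [ha2def]
          apply div_le_self (by linarith only [hw0vpm]) (by linarith only [hη0])
        linarith only [h1, hvpmpos0, hvpm1, hη0, hbdef]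
      have hba2 : b - a2 ≤ (b + 1) * η + (vp - vpm) := by
        have hkey : b - (vpm - (1 + η)) / (1 + η)
            = ((b + 1) * η + (vp - vpm)) / (1 + η) := by
          rw [hbdef]; field_simp; ring
        rw [ha2def, hkey]
        apply div_le_self _ (by linarith only [hη0])
        have h9 : 0 ≤ vp - vpm := by linarith only [hvpmpos0, hvpm1]
        exact add_nonneg (mul_nonneg (by linarith only [hb0]) hη0.le) h9
      have hE1 : Real.exp (-(k * x)) ≤ 1 :=
        Real.exp_le_one_iff.2 (by linarith only [mul_nonneg hk0.le hx])
      have hEF : |Real.exp (-(k * x)) - Real.exp (-(κε * x))| ≤ |k - κε| / (k / 4) :=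
        aux_exp_diff (by linarith only [hk0]) (by linarith only [hk0]) hκεl hx
      have hQq2 : |Q - q2| ≤ (b - a2) + b * (|k - κε| / (k / 4)) := by
        have hid : Q - q2 = (b - a2) * Real.exp (-(k * x))
            + a2 * (Real.exp (-(k * x)) - Real.exp (-(κε * x))) := by
          rw [hQdef, hq2def]; ring
        rw [hid]
        calc |(b - a2) * Real.exp (-(k * x))
              + a2 * (Real.exp (-(k * x)) - Real.exp (-(κε * x)))|
            ≤ |(b - a2) * Real.exp (-(k * x))|
              + |a2 * (Real.exp (-(k * x)) - Real.exp (-(κε * x)))| := abs_add_le _ _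
          _ = (b - a2) * Real.exp (-(k * x))
              + a2 * |Real.exp (-(k * x)) - Real.exp (-(κε * x))| := by
              rw [abs_mul, abs_mul, abs_of_nonneg (by linarith only [ha2leb] : 0 ≤ b - a2),
                abs_of_nonneg (Real.exp_pos _).le, abs_of_nonneg ha2nonneg]
          _ ≤ (b - a2) * 1 + b * (|k - κε| / (k / 4)) := by
              apply add_le_add
              · exact mul_le_mul_of_nonneg_left hE1 (by linarith only [ha2leb])
              · exact mul_le_mul ha2leb hEF (abs_nonneg _) hb0.le
          _ = (b - a2) + b * (|k - κε| / (k / 4)) := by ring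
      have hdiff1 : vlim x - vb ε x ≤ (vp - vpm) + vp * |Q - q2| := by
        have h1 : vlim x - vb ε x ≤ vp / (1 + Q) - vpm / (1 + q2) := by
          rw [hℓ]; linarith only [hlb2]
        have h2 : vp / (1 + Q) - vpm / (1 + q2)
            = (vp - vpm) / (1 + Q) + (vpm / (1 + Q) - vpm / (1 + q2)) := by ring
        have h3 : (vp - vpm) / (1 + Q) ≤ vp - vpm :=
          div_le_self (by linarith only [hvpmpos0, hvpm1]) (by linarith only [hQ0])
        have h4 : vpm / (1 + Q) - vpm / (1 + q2) ≤ vpm * |Q - q2| :=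
          aux_frac hvpm0.le hQ0 hq2nonneg
        have h5 : vpm * |Q - q2| ≤ vp * |Q - q2| :=
          mul_le_mul_of_nonneg_right hvpmlevp (abs_nonneg _)
        linarith only [h1, h2, h3, h4, h5]
      have hkκ : |k - κε| ≤ vp * C₂ / (μ * s) * η + 4 * s * b / μ * η := by
        rw [abs_sub_comm]; exact hκεk
      have h6 : b * (|k - κε| / (k / 4))
          ≤ b * ((vp * C₂ / (μ * s) * η + 4 * s * b / μ * η) / (k / 4)) := by
        apply mul_le_mul_of_nonneg_left _ hb0.le
        exact (div_le_div_iff_of_pos_right (by linarith only [hk0])).2 hkκ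
      have h7 : vp * |Q - q2| ≤ vp * (((b + 1) * η + 2 * b * η)
          + b * ((vp * C₂ / (μ * s) * η + 4 * s * b / μ * η) / (k / 4))) := by
        apply mul_le_mul_of_nonneg_left _ hvp0.le
        linarith only [hQq2, hba2, hvpvpm, h6]
      have h8 : 2 * b * η + vp * (((b + 1) * η + 2 * b * η)
          + b * ((vp * C₂ / (μ * s) * η + 4 * s * b / μ * η) / (k / 4))) = U2 * η := by
        rw [hU2def]; field_simp; ring
      linarith only [hdiff1, hvpvpm, h7, h8]
    · push_neg at hcase
      obtain ⟨t, ht, hwt⟩ := hcase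
      have h1 : vb ε t ≤ vb ε x := (hmono ε hεε₀).monotone ht.2
      have h2 : vlim x ≤ vp := by
        rw [hℓ]
        apply div_le_self hvp0.le (by linarith only [hQ0])
      linarith only [h1, h2, hwt, hvpvpm,
        mul_le_mul_of_nonneg_right hU2ge hη0.le]
  have hfinal : |vb ε x - vlim x| ≤ (U1 + U2) * η := by
    rw [abs_le]
    constructor
    · linarith only [hlowerF, mul_nonneg hU10.le hη0.le]
    · linarith only [hupperF, mul_nonneg hU20.le hη0.le]
  exact hfinal
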